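/- Let F(X) be a finitely generated free group and S ≤ F(X) a finitely generated subgroup. Then the full preimage π⁻¹(S) ⊆ (X ∪ X⁻¹)* is a visibly pushdown language (for some partition) if and only if S has finite index in F(X), in which case π⁻¹(S) is in fact regular. -/

import Mathlib

inductive VKind | call | internal | response
deriving DecidableEq

/-- A (nondeterministic) visibly pushdown automaton over alphabet `A`
partitioned by `kind` into call, internal and response letters. -/
structure VPA (A : Type) (kind : A → VKind) where
  Q : Type
  Γ : Type
  [finQ : Fintype Q]
  [finΓ : Fintype Γ]
  init : Q
  accept : Set Q
  /-- transitions on call letters: push one symbol, do not inspect the stack -/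
  δc : Q → A → Set (Q × Γ)
  /-- transitions on internal letters: do not inspect or modify the stack -/
  δi : Q → A → Set Q
  /-- transitions on response letters: pop the topmost stack symbol -/
  δr : Q → A → Γ → Set Q
  /-- transitions on response letters read on the empty stack (bottom symbol) -/
  δb : Q → A → Set Q

namespace VPA

variable {A : Type} {kind : A → VKind}

inductive Steps (M : VPA A kind) : M.Q × List M.Γ → List A → M.Q × List M.Γ → Prop
  | nil (c) : Steps M c [] c
  | call {q s a q' γ w c} : kind a = .call → (q', γ) ∈ M.δc q a →
      Steps M (q', γ :: s) w c → Steps M (q, s) (a :: w) c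
  | internal {q s a q' w c} : kind a = .internal → q' ∈ M.δi q a →
      Steps M (q', s) w c → Steps M (q, s) (a :: w) c
  | pop {q γ s a q' w c} : kind a = .response → q' ∈ M.δr q a γ →
      Steps M (q', s) w c → Steps M (q, γ :: s) (a :: w) c
  | popEmpty {q a q' w c} : kind a = .response → q' ∈ M.δb q a →
      Steps M (q', []) w c → Steps M (q, []) (a :: w) c

/-- A VPA accepts a word if reading it from the initial state with empty stack
can end in an accepting state (with arbitrary stack contents). -/
def Accepts (M : VPA A kind) (w : List A) : Prop :=
  ∃ c : M.Q × List M.Γ, M.Steps (M.init, []) w c ∧ c.1 ∈ M.accept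

end VPA

/-- `L` is a visibly pushdown language over the partition `kind`. -/
def IsVPL {A : Type} (kind : A → VKind) (L : Set (List A)) : Prop :=
  ∃ M : VPA A kind, L = {w | M.Accepts w}

/-- Projection from words over X ⊔ X⁻¹ to the free group F(X). -/
def projFree {X : Type} (w : List (X ⊕ X)) : FreeGroup X :=
  (w.map (Sum.elim (fun x => FreeGroup.of x) (fun x => (FreeGroup.of x)⁻¹))).prod

open FreeGroup

namespace StallingsFlow

variable {X : Type} (S : Subgroup (FreeGroup X))

/-- The elementary chain of a single letter traversed at basepoint `ν`. -/
noncomputable def edgeTerm (p : X × Bool) (ν : FreeGroup X ⧸ S) :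
    ((FreeGroup X ⧸ S) × X) →₀ ℤ :=
  if p.2 then Finsupp.single (ν, p.1) 1
  else - Finsupp.single ((FreeGroup.of p.1)⁻¹ • ν, p.1) 1

/-- The chain traced by a word read (as left multiplication) starting at `ω`. -/
noncomputable def flowW : List (X × Bool) → (FreeGroup X ⧸ S) → ((FreeGroup X ⧸ S) × X) →₀ ℤ
  | [], _ => 0
  | p :: w, ω => flowW w ω + edgeTerm S p ((FreeGroup.mk w) • ω)

lemma flowW_append (w₁ w₂ : List (X × Bool)) (ω : FreeGroup X ⧸ S) :
    flowW S (w₁ ++ w₂) ω = flowW S w₂ ω + flowW S w₁ ((FreeGroup.mk w₂) • ω) := by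
  induction w₁ with
  | nil => simp [flowW]
  | cons p w₁ ih =>
      have h : FreeGroup.mk (w₁ ++ w₂) = FreeGroup.mk w₁ * FreeGroup.mk w₂ := (mul_mk).symm
      simp only [List.cons_append, flowW, List.append_eq, ih, h, mul_smul]
      abel

lemma edgeTerm_cancel (x : X) (b : Bool) (ν : FreeGroup X ⧸ S) :
    edgeTerm S (x, !b) ν + edgeTerm S (x, b) ((FreeGroup.mk [(x, !b)]) • ν) = 0 := by
  have hof : FreeGroup.mk [(x, true)] = FreeGroup.of x := rfl
  have hinv : FreeGroup.mk [(x, false)] = (FreeGroup.of x)⁻¹ := by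
    rw [← hof, inv_mk]; simp [invRev]
  cases b with
  | true => simp [edgeTerm, hinv]
  | false => simp [edgeTerm, hof, inv_smul_smul]

lemma flowW_step {w₁ w₂ : List (X × Bool)} (h : FreeGroup.Red.Step w₁ w₂)
    (ω : FreeGroup X ⧸ S) : flowW S w₁ ω = flowW S w₂ ω := by
  cases h with
  | @not L₁ L₂ x b =>
      have hmk : FreeGroup.mk ((x, b) :: (x, !b) :: L₂) = FreeGroup.mk L₂ := by
        have := Quot.sound (FreeGroup.Red.Step.not (L₁ := []) (L₂ := L₂) (x := x) (b := b))
        simp at this; exact this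
      rw [flowW_append, flowW_append, hmk]
      congr 1
      show flowW S ((x, b) :: (x, !b) :: L₂) ω = flowW S L₂ ω
      have h2 : FreeGroup.mk ((x, !b) :: L₂) = FreeGroup.mk [(x, !b)] * FreeGroup.mk L₂ := by
        rw [mul_mk]; rfl
      simp only [flowW, h2, mul_smul]
      have := edgeTerm_cancel S x b ((FreeGroup.mk L₂) • ω)
      rw [add_assoc, this, add_zero]

/-- The chain traced by a group element read from `ω`. -/
noncomputable def Flow (g : FreeGroup X) (ω : FreeGroup X ⧸ S) :
    ((FreeGroup X ⧸ S) × X) →₀ ℤ :=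
  Quot.liftOn g (fun w => flowW S w ω) (fun _ _ h => flowW_step S h ω)

lemma Flow_mk (w : List (X × Bool)) (ω : FreeGroup X ⧸ S) :
    Flow S (FreeGroup.mk w) ω = flowW S w ω := rfl

lemma Flow_mul (g h : FreeGroup X) (ω : FreeGroup X ⧸ S) :
    Flow S (g * h) ω = Flow S h ω + Flow S g (h • ω) := by
  induction g using Quot.inductionOn with
  | _ w₁ =>
    induction h using Quot.inductionOn with
    | _ w₂ =>
      show Flow S (FreeGroup.mk w₁ * FreeGroup.mk w₂) _ = _
      rw [mul_mk, Flow_mk, flowW_append]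
      rfl

lemma Flow_one (ω : FreeGroup X ⧸ S) : Flow S 1 ω = 0 := rfl

lemma Flow_inv (g : FreeGroup X) (ω : FreeGroup X ⧸ S) :
    Flow S g⁻¹ ω = - Flow S g (g⁻¹ • ω) := by
  have := Flow_mul S g g⁻¹ ω
  rw [mul_inv_cancel, Flow_one] at this
  exact eq_neg_of_add_eq_zero_left this.symm

lemma Flow_of (x : X) (ω : FreeGroup X ⧸ S) :
    Flow S (FreeGroup.of x) ω = Finsupp.single (ω, x) 1 := by
  show flowW S [(x, true)] ω = _
  simp [flowW, edgeTerm, FreeGroup.one_eq_mk.symm]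

lemma Flow_of_mul (x : X) (h : FreeGroup X) (ω : FreeGroup X ⧸ S) :
    Flow S (FreeGroup.of x * h) ω = Flow S h ω + Finsupp.single (h • ω, x) 1 := by
  rw [Flow_mul, Flow_of]

lemma Flow_pow_apply (x : X) (ω : FreeGroup X ⧸ S) :
    ∀ m : ℕ, 1 ≤ m → 1 ≤ (Flow S ((FreeGroup.of x) ^ m) ω) (ω, x)
  | 0, h => by omega
  | 1, _ => by simp [pow_one, Flow_of]
  | (m + 2), _ => by
      classical
      have ih := Flow_pow_apply x ω (m + 1) (by omega)
      have : (FreeGroup.of x) ^ (m + 2) = FreeGroup.of x * (FreeGroup.of x) ^ (m + 1) :=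
        (pow_succ' _ _)
      rw [this, Flow_of_mul, Finsupp.add_apply]
      have h2 : 0 ≤ (Finsupp.single (((FreeGroup.of x) ^ (m + 1)) • ω, x) (1 : ℤ)) (ω, x) := by
        rw [Finsupp.single_apply]
        split <;> norm_num
      omega

variable {S} in
lemma Flow_mem_span (T : Finset (FreeGroup X)) (hT : Subgroup.closure (T : Set (FreeGroup X)) = S)
    {s : FreeGroup X} (hs : s ∈ S) :
    Flow S s (((1 : FreeGroup X) : FreeGroup X ⧸ S)) ∈
      Submodule.span ℤ ((fun t => Flow S t ((1 : FreeGroup X) : FreeGroup X ⧸ S)) '' (T : Set (FreeGroup X))) := by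
  rw [← hT] at hs
  induction hs using Subgroup.closure_induction with
  | mem t ht => exact Submodule.subset_span ⟨t, ht, rfl⟩
  | one => rw [Flow_one]; exact Submodule.zero_mem _
  | mul a b ha hb iha ihb =>
      have hb' : b ∈ S := by rw [← hT]; exact hb
      have hsm : b • ((1 : FreeGroup X) : FreeGroup X ⧸ S) = ((1 : FreeGroup X) : FreeGroup X ⧸ S) := by
        rw [MulAction.Quotient.smul_mk]
        exact (QuotientGroup.eq).mpr (by simpa using (S.inv_mem hb'))
      rw [Flow_mul, hsm]
      exact Submodule.add_mem _ ihb iha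
  | inv a ha iha =>
      have ha' : a ∈ S := by rw [← hT]; exact ha
      have hsm : a⁻¹ • ((1 : FreeGroup X) : FreeGroup X ⧸ S) = ((1 : FreeGroup X) : FreeGroup X ⧸ S) := by
        rw [MulAction.Quotient.smul_mk]
        exact (QuotientGroup.eq).mpr (by simpa using ha')
      rw [Flow_inv, hsm]
      exact Submodule.neg_mem _ iha

variable {S} in
lemma support_subset_of_mem_span {K : Set (((FreeGroup X ⧸ S) × X))}
    {G : Set (((FreeGroup X ⧸ S) × X) →₀ ℤ)}
    (hG : ∀ c ∈ G, ↑c.support ⊆ K)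
    {c : ((FreeGroup X ⧸ S) × X) →₀ ℤ} (hc : c ∈ Submodule.span ℤ G) :
    ↑c.support ⊆ K := by
  classical
  induction hc using Submodule.span_induction with
  | mem g hg => exact hG g hg
  | zero => simp
  | add a b _ _ iha ihb =>
      intro p hp
      have hp' := Finsupp.support_add (Finset.mem_coe.mp hp)
      rcases Finset.mem_union.mp hp' with h | h
      · exact iha (Finset.mem_coe.mpr h)
      · exact ihb (Finset.mem_coe.mpr h)
  | smul z a _ iha =>
      exact fun p hp => iha (Finset.mem_coe.mpr (Finsupp.support_smul (Finset.mem_coe.mp hp)))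

/-- If (a conjugate of) a power of every generator letter lies in `S`
at every coset, and `S` is finitely generated, then `S` has finite index. -/
theorem finiteIndex_of_orbits (hfg : S.FG)
    (H : ∀ (x : X) (g : FreeGroup X), ∃ k : ℤ, k ≠ 0 ∧ g⁻¹ * (FreeGroup.of x) ^ k * g ∈ S) :
    S.FiniteIndex := by
  classical
  obtain ⟨T, hT⟩ := hfg
  set base : FreeGroup X ⧸ S := ((1 : FreeGroup X) : FreeGroup X ⧸ S)
  set K : Set ((FreeGroup X ⧸ S) × X) :=
    ⋃ t ∈ (T : Set (FreeGroup X)), ↑((Flow S t base).support) with hK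
  have hKfin : K.Finite :=
    Set.Finite.biUnion T.finite_toSet (fun t _ => (Flow S t base).support.finite_toSet)
  -- every edge (ω, x) lies in K
  have hedge : ∀ (ω : FreeGroup X ⧸ S) (x : X), (ω, x) ∈ K := by
    intro ω x
    obtain ⟨g, rfl⟩ := QuotientGroup.mk_surjective ω
    obtain ⟨k, hk0, hkS⟩ := H x g
    -- find a positive power
    obtain ⟨m, hm1, hmS⟩ :
        ∃ m : ℕ, 1 ≤ m ∧ g⁻¹ * (FreeGroup.of x) ^ m * g ∈ S := by
      rcases lt_or_gt_of_ne hk0 with hneg | hpos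
      · refine ⟨(-k).toNat, by omega, ?_⟩
        have h2 : (g⁻¹ * (FreeGroup.of x) ^ k * g)⁻¹ ∈ S := S.inv_mem hkS
        have h3 : (g⁻¹ * (FreeGroup.of x) ^ k * g)⁻¹
            = g⁻¹ * (FreeGroup.of x) ^ (-k) * g := by
          rw [zpow_neg]; group
        rw [h3] at h2
        have h4 : (FreeGroup.of x) ^ (-k) = (FreeGroup.of x) ^ ((-k).toNat) := by
          rw [← zpow_natCast]; congr 1; omega
        rwa [h4] at h2
      · refine ⟨k.toNat, by omega, ?_⟩
        have h4 : (FreeGroup.of x) ^ k = (FreeGroup.of x) ^ (k.toNat) := by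
          rw [← zpow_natCast]; congr 1; omega
        rwa [h4] at hkS
    set ω : FreeGroup X ⧸ S := ((g : FreeGroup X) : FreeGroup X ⧸ S) with hω
    -- Flow (g⁻¹ x^m g) base = Flow ((of x)^m) ω
    have hsmber : ((FreeGroup.of x) ^ m * g) • base = ω := by
      show ((FreeGroup.of x) ^ m * g) • ((1 : FreeGroup X) : FreeGroup X ⧸ S) = _
      rw [MulAction.Quotient.smul_mk, smul_eq_mul, mul_one, hω]
      refine (QuotientGroup.eq).mpr ?_
      have h5 : ((FreeGroup.of x) ^ m * g)⁻¹ * g = (g⁻¹ * (FreeGroup.of x) ^ m * g)⁻¹ := by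
        group
      rw [h5]
      exact S.inv_mem hmS
    have hgbase : g • base = ω := by
      show g • ((1 : FreeGroup X) : FreeGroup X ⧸ S) = _
      rw [MulAction.Quotient.smul_mk, smul_eq_mul, mul_one, hω]
    have hginv : g⁻¹ • ω = base := by
      rw [hω]
      show g⁻¹ • ((g : FreeGroup X) : FreeGroup X ⧸ S) = _
      rw [MulAction.Quotient.smul_mk, smul_eq_mul, inv_mul_cancel]
    have hflow : Flow S (g⁻¹ * (FreeGroup.of x) ^ m * g) base
        = Flow S ((FreeGroup.of x) ^ m) ω := by
      have e1 : Flow S (g⁻¹ * (FreeGroup.of x) ^ m * g) base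
          = Flow S ((FreeGroup.of x) ^ m * g) base
            + Flow S g⁻¹ (((FreeGroup.of x) ^ m * g) • base) := by
        rw [mul_assoc, Flow_mul]
      have e2 : Flow S ((FreeGroup.of x) ^ m * g) base
          = Flow S g base + Flow S ((FreeGroup.of x) ^ m) (g • base) := Flow_mul ..
      rw [e1, e2, hsmber, hgbase, Flow_inv, hginv]
      abel
    have hmem := Flow_mem_span T hT hmS
    have hsupp := support_subset_of_mem_span
      (K := K) (G := (fun t => Flow S t base) '' (T : Set (FreeGroup X)))
      (by rintro c ⟨t, ht, rfl⟩
          exact fun p hp => Set.mem_biUnion ht hp) hmem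
    apply hsupp
    have hco := Flow_pow_apply S x ω m hm1
    rw [← hflow] at hco
    simp only [Finset.coe_mem, Finsupp.mem_support_iff, Finset.mem_coe]
    exact fun hzero => by rw [hzero] at hco; omega
  -- conclude: the quotient is finite
  have hfin : Finite (FreeGroup X ⧸ S) := by
    by_cases hX : Nonempty X
    · obtain ⟨x₀⟩ := hX
      have hinj : Function.Injective (fun ω : FreeGroup X ⧸ S =>
          (⟨(ω, x₀), hedge ω x₀⟩ : K)) := by
        intro a b hab
        exact congrArg (fun p : K => (p : ((FreeGroup X ⧸ S) × X)).1) hab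
      haveI := hKfin.to_subtype
      exact Finite.of_injective _ hinj
    · haveI : IsEmpty X := not_nonempty_iff.mp hX
      haveI : Subsingleton (FreeGroup X) := by
        constructor; intro a b; exact Subsingleton.elim a b
      haveI : Subsingleton (FreeGroup X ⧸ S) := Quotient.instSubsingletonQuotient _
      infer_instance
  exact Subgroup.finiteIndex_of_finite_quotient

theorem exists_good (hfg : S.FG) (h : ¬ S.FiniteIndex) :
    ∃ (x : X) (g : FreeGroup X), ∀ k : ℤ, g⁻¹ * (FreeGroup.of x) ^ k * g ∈ S → k = 0 := by
  by_contra hcon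
  push_neg at hcon
  refine h (finiteIndex_of_orbits S hfg ?_)
  intro x g
  obtain ⟨k, hk1, hk2⟩ := hcon x g
  exact ⟨k, hk2, hk1⟩

end StallingsFlow


namespace VPA

variable {A : Type} {kind : A → VKind}

variable {M : VPA A kind}

theorem Steps.trans {c₁ c₂ c₃ : M.Q × List M.Γ} {w₁ w₂ : List A}
    (h₁ : M.Steps c₁ w₁ c₂) (h₂ : M.Steps c₂ w₂ c₃) : M.Steps c₁ (w₁ ++ w₂) c₃ := by
  induction h₁ with
  | nil c => exact h₂
  | call h hm _ ih => exact .call h hm (ih h₂)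
  | internal h hm _ ih => exact .internal h hm (ih h₂)
  | pop h hm _ ih => exact .pop h hm (ih h₂)
  | popEmpty h hm _ ih => exact .popEmpty h hm (ih h₂)

theorem steps_append {c₁ c₃ : M.Q × List M.Γ} {w₁ w₂ : List A} :
    M.Steps c₁ (w₁ ++ w₂) c₃ ↔ ∃ c₂, M.Steps c₁ w₁ c₂ ∧ M.Steps c₂ w₂ c₃ := by
  constructor
  · intro h
    induction w₁ generalizing c₁ with
    | nil => exact ⟨c₁, .nil _, h⟩
    | cons a w₁ ih =>
        cases h with
        | call h hm hs =>
            obtain ⟨c₂, h1, h2⟩ := ih hs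
            exact ⟨c₂, .call h hm h1, h2⟩
        | internal h hm hs =>
            obtain ⟨c₂, h1, h2⟩ := ih hs
            exact ⟨c₂, .internal h hm h1, h2⟩
        | pop h hm hs =>
            obtain ⟨c₂, h1, h2⟩ := ih hs
            exact ⟨c₂, .pop h hm h1, h2⟩
        | popEmpty h hm hs =>
            obtain ⟨c₂, h1, h2⟩ := ih hs
            exact ⟨c₂, .popEmpty h hm h1, h2⟩
  · rintro ⟨c₂, h1, h2⟩; exact h1.trans h2

theorem stack_le_of_steps {c c' : M.Q × List M.Γ} {w : List A} (h : M.Steps c w c') :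
    c'.2.length ≤ c.2.length + w.length := by
  induction h with
  | nil c => simp
  | call _ _ _ ih => simp at ih ⊢; omega
  | internal _ _ _ ih => simp at ih ⊢; omega
  | pop _ _ _ ih => simp at ih ⊢; omega
  | popEmpty _ _ _ ih => simp at ih ⊢; omega

theorem stack_le_of_noncall {c c' : M.Q × List M.Γ} {w : List A} (h : M.Steps c w c')
    (hw : ∀ a ∈ w, kind a ≠ .call) : c'.2.length ≤ c.2.length := by
  induction h with
  | nil c => exact le_rfl
  | call h hm _ ih => exact absurd h (hw _ (by simp))
  | internal h hm _ ih =>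
      exact ih (fun a ha => hw a (List.mem_cons_of_mem _ ha))
  | pop h hm _ ih =>
      exact le_trans (ih (fun a ha => hw a (List.mem_cons_of_mem _ ha))) (by simp)
  | popEmpty h hm _ ih =>
      exact ih (fun a ha => hw a (List.mem_cons_of_mem _ ha))

/-- Padding the stack below, provided the word is short enough never to dig into it. -/
theorem steps_pad {c c' : M.Q × List M.Γ} {w : List A} (h : M.Steps c w c')
    (hlen : w.length ≤ c.2.length) (t : List M.Γ) :
    M.Steps (c.1, c.2 ++ t) w (c'.1, c'.2 ++ t) := by
  induction h with
  | nil c => exact .nil _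
  | @call q s a q' γ w c h hm _ ih =>
      exact .call h hm (ih (by simp at hlen ⊢; omega))
  | internal h hm _ ih => exact .internal h hm (ih (by simp at hlen ⊢; omega))
  | pop h hm _ ih => exact .pop h hm (ih (by simp at hlen ⊢; omega))
  | popEmpty h hm _ ih => simp at hlen

/-- Removing padding from the stack, provided the word never digs into it. -/
theorem steps_unpad {c c' : M.Q × List M.Γ} {w : List A} (h : M.Steps c w c') :
    ∀ s t : List M.Γ, c.2 = s ++ t → w.length ≤ s.length →
      ∃ s', c'.2 = s' ++ t ∧ M.Steps (c.1, s) w (c'.1, s') := by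
  induction h with
  | nil c =>
      intro s t hst _
      exact ⟨s, hst, .nil _⟩
  | @call q s₀ a q' γ w c h hm _ ih =>
      intro s t hst hlen
      obtain ⟨s', h1, h2⟩ := ih (γ :: s) t (by simp only [List.cons_append]; exact congrArg (List.cons γ) hst) (by simp at hlen ⊢; omega)
      exact ⟨s', h1, .call h hm h2⟩
  | internal h hm _ ih =>
      intro s t hst hlen
      obtain ⟨s', h1, h2⟩ := ih s t hst (by simp at hlen ⊢; omega)
      exact ⟨s', h1, .internal h hm h2⟩
  | @pop q γ s₀ a q' w c h hm _ ih =>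
      intro s t hst hlen
      match s, hst with
      | [], hst => simp at hlen
      | γ' :: s₂, hst =>
          have hγ : γ' = γ := by simpa using congrArg (List.head?) hst.symm
          have hs₀ : s₀ = s₂ ++ t := by simpa using congrArg (List.tail) hst
          subst hγ
          obtain ⟨s', h1, h2⟩ := ih s₂ t hs₀ (by simp at hlen ⊢; omega)
          exact ⟨s', h1, .pop h hm h2⟩
  | popEmpty h hm _ ih =>
      intro s t hst hlen
      match s, hst with
      | [], hst => simp at hlen

/-- A run along call letters can be padded arbitrarily. -/
theorem steps_callpad {c c' : M.Q × List M.Γ} {w : List A} (h : M.Steps c w c')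
    (hw : ∀ a ∈ w, kind a = .call) (t : List M.Γ) :
    M.Steps (c.1, c.2 ++ t) w (c'.1, c'.2 ++ t) := by
  induction h with
  | nil c => exact .nil _
  | call h hm _ ih =>
      exact .call h hm (ih (fun a ha => hw a (List.mem_cons_of_mem _ ha)))
  | internal h hm _ ih =>
      rw [hw _ (by simp)] at h; exact absurd h (by simp)
  | pop h hm _ ih =>
      rw [hw _ (by simp)] at h; exact absurd h (by simp)
  | popEmpty h hm _ ih =>
      rw [hw _ (by simp)] at h; exact absurd h (by simp)

/-- A run along call letters from any stack is a pushed-prefix run from the empty stack. -/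
theorem steps_callstrip {c c' : M.Q × List M.Γ} {w : List A} (h : M.Steps c w c')
    (hw : ∀ a ∈ w, kind a = .call) :
    ∃ p, c'.2 = p ++ c.2 ∧ p.length = w.length ∧ M.Steps (c.1, []) w (c'.1, p) := by
  induction h with
  | nil c => exact ⟨[], rfl, rfl, .nil _⟩
  | @call q s a q' γ w c h hm hs ih =>
      obtain ⟨p₁, h1, h2, h3⟩ := ih (fun a ha => hw a (List.mem_cons_of_mem _ ha))
      refine ⟨p₁ ++ [γ], by simp [h1], by simp [h2], ?_⟩
      have h4 := steps_callpad h3 (fun a ha => hw a (List.mem_cons_of_mem _ ha)) [γ]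
      exact .call h hm h4
  | internal h hm _ ih =>
      rw [hw _ (by simp)] at h; exact absurd h (by simp)
  | pop h hm _ ih =>
      rw [hw _ (by simp)] at h; exact absurd h (by simp)
  | popEmpty h hm _ ih =>
      rw [hw _ (by simp)] at h; exact absurd h (by simp)

theorem pump_noncall (M : VPA A kind) (u u' : List A) (c d : A) (hc : kind c ≠ .call)
    (hmem : ∀ n m : ℕ,
      M.Accepts (u ++ List.replicate n c ++ List.replicate m d ++ u') ↔ n = m) : False := by
  classical
  set B : Set (M.Q × List M.Γ) := {p | p.2.length ≤ u.length} with hB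
  have hBfin : B.Finite := by
    haveI := M.finQ; haveI := M.finΓ
    have : B ⊆ (Set.univ : Set M.Q) ×ˢ {l : List M.Γ | l.length ≤ u.length} := by
      intro p hp; exact ⟨trivial, hp⟩
    exact (Set.Finite.prod Set.finite_univ (List.finite_length_le _ _)).subset this
  set R : ℕ → Set (M.Q × List M.Γ) :=
    fun n => {cfg | M.Steps (M.init, []) (u ++ List.replicate n c) cfg} with hR
  have hsub : ∀ n, R n ⊆ B := by
    intro n cfg hcfg
    obtain ⟨mid, h1, h2⟩ := steps_append.mp hcfg
    have hb1 : mid.2.length ≤ u.length := by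
      have := stack_le_of_steps h1
      simpa using this
    have hb2 := stack_le_of_noncall h2
      (fun a ha => by rw [List.eq_of_mem_replicate ha]; exact hc)
    exact le_trans hb2 hb1
  haveI : Finite ({t : Set (M.Q × List M.Γ) | t ⊆ B}) := hBfin.finite_subsets.to_subtype
  obtain ⟨n, n', hne, heq⟩ := Finite.exists_ne_map_eq_of_infinite
    (fun n : ℕ => (⟨R n, hsub n⟩ : {t : Set (M.Q × List M.Γ) | t ⊆ B}))
  have hReq : R n = R n' := congrArg Subtype.val heq
  have hacc : M.Accepts (u ++ List.replicate n c ++ List.replicate n d ++ u') :=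
    (hmem n n).mpr rfl
  obtain ⟨fin, hst, hfin⟩ := hacc
  rw [show u ++ List.replicate n c ++ List.replicate n d ++ u'
      = (u ++ List.replicate n c) ++ (List.replicate n d ++ u') by simp] at hst
  obtain ⟨mid, h1, h2⟩ := steps_append.mp hst
  have hmid' : mid ∈ R n' := by rw [← hReq]; exact h1
  have hacc' : M.Accepts (u ++ List.replicate n' c ++ List.replicate n d ++ u') := by
    refine ⟨fin, ?_, hfin⟩
    rw [show u ++ List.replicate n' c ++ List.replicate n d ++ u'
        = (u ++ List.replicate n' c) ++ (List.replicate n d ++ u') by simp]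
    exact Steps.trans hmid' h2
  exact hne ((hmem n' n).mp hacc').symm

theorem pump_bothcall (M : VPA A kind) (u u' : List A) (c d : A) (hc : kind c = .call)
    (hd : kind d = .call)
    (hmem : ∀ n m : ℕ,
      M.Accepts (u ++ List.replicate n c ++ List.replicate m d ++ u') ↔ n = m) : False := by
  classical
  haveI := M.finQ
  set R : ℕ → Set M.Q :=
    fun n => {q | ∃ s, M.Steps (M.init, []) (u ++ List.replicate (u'.length + n) c) (q, s)}
    with hR
  obtain ⟨n, n', hne, heq⟩ := Finite.exists_ne_map_eq_of_infinite R
  set N := u'.length + n with hN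
  set N' := u'.length + n' with hN'
  -- transplanting a successful continuation to another stack
  have key : ∀ (q : M.Q) (s s' : List M.Γ),
      (∃ fin, M.Steps (q, s) (List.replicate N d ++ u') fin ∧ fin.1 ∈ M.accept) →
      (∃ fin, M.Steps (q, s') (List.replicate N d ++ u') fin ∧ fin.1 ∈ M.accept) := by
    rintro q s s' ⟨fin, hst, hfin⟩
    obtain ⟨mid, h1, h2⟩ := steps_append.mp hst
    have hdw : ∀ a ∈ List.replicate N d, kind a = VKind.call :=
      fun a ha => by rw [List.eq_of_mem_replicate ha]; exact hd
    obtain ⟨p, hp1, hp2, hp3⟩ := steps_callstrip h1 hdw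
    have hplen : u'.length ≤ p.length := by
      rw [hp2, List.length_replicate]; omega
    have h2' : M.Steps (mid.1, p ++ s) u' fin := by
      rw [← hp1]; exact h2
    obtain ⟨s₃, h3, h4⟩ := steps_unpad h2' p s rfl hplen
    have b1 : M.Steps (q, s') (List.replicate N d) (mid.1, p ++ s') := by
      have := steps_callpad hp3 hdw s'
      simpa using this
    have b2 : M.Steps (mid.1, p ++ s') u' (fin.1, s₃ ++ s') :=
      steps_pad h4 hplen s'
    exact ⟨(fin.1, s₃ ++ s'), b1.trans b2, hfin⟩
  have hacc : M.Accepts (u ++ List.replicate N c ++ List.replicate N d ++ u') :=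
    (hmem N N).mpr rfl
  obtain ⟨fin, hst, hfin⟩ := hacc
  rw [show u ++ List.replicate N c ++ List.replicate N d ++ u'
      = (u ++ List.replicate N c) ++ (List.replicate N d ++ u') by simp] at hst
  obtain ⟨mid, h1, h2⟩ := steps_append.mp hst
  have hq : mid.1 ∈ R n := ⟨mid.2, by exact h1⟩
  have hq' : mid.1 ∈ R n' := heq ▸ hq
  obtain ⟨s'', hs''⟩ := hq'
  obtain ⟨fin', hst', hfin'⟩ := key mid.1 mid.2 s'' ⟨fin, h2, hfin⟩
  have hacc' : M.Accepts (u ++ List.replicate N' c ++ List.replicate N d ++ u') := by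
    refine ⟨fin', ?_, hfin'⟩
    rw [show u ++ List.replicate N' c ++ List.replicate N d ++ u'
        = (u ++ List.replicate N' c) ++ (List.replicate N d ++ u') by simp]
    exact Steps.trans hs'' hst'
  have := (hmem N' N).mp hacc'
  omega

end VPA

section Glue

open FreeGroup

variable {X : Type}

/-- Word over `X ⊕ X` representing a free group element. -/
noncomputable def wordFor (g : FreeGroup X) : List (X ⊕ X) :=
  letI := Classical.decEq X
  (FreeGroup.toWord g).map (fun p => if p.2 then Sum.inl p.1 else Sum.inr p.1)

lemma projFree_nil : projFree ([] : List (X ⊕ X)) = 1 := rfl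

lemma projFree_cons (a : X ⊕ X) (w : List (X ⊕ X)) :
    projFree (a :: w) =
      Sum.elim (fun x => FreeGroup.of x) (fun x => (FreeGroup.of x)⁻¹) a * projFree w := by
  simp [projFree]

lemma projFree_append (w₁ w₂ : List (X ⊕ X)) :
    projFree (w₁ ++ w₂) = projFree w₁ * projFree w₂ := by
  simp [projFree]

lemma projFree_map_mk (w : List (X × Bool)) :
    projFree (w.map (fun p => if p.2 then Sum.inl p.1 else Sum.inr p.1)) = FreeGroup.mk w := by
  induction w with
  | nil => exact FreeGroup.one_eq_mk.symm
  | cons p w ih =>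
      obtain ⟨x, b⟩ := p
      have hmk : FreeGroup.mk ((x, b) :: w) = FreeGroup.mk [(x, b)] * FreeGroup.mk w := by
        rw [FreeGroup.mul_mk]; rfl
      cases b with
      | true =>
          simp only [List.map_cons, if_pos, projFree_cons, ih, hmk]
          rfl
      | false =>
          simp only [List.map_cons, if_neg, projFree_cons, ih, hmk]
          have : FreeGroup.mk [(x, false)] = (FreeGroup.of x)⁻¹ := by
            rw [show FreeGroup.of x = FreeGroup.mk [(x, true)] from rfl, FreeGroup.inv_mk]
            simp [FreeGroup.invRev]
          simp [this]

lemma projFree_wordFor (g : FreeGroup X) : projFree (wordFor g) = g := by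
  letI := Classical.decEq X
  exact (projFree_map_mk _).trans FreeGroup.mk_toWord

lemma projFree_replicate_inl (x : X) (n : ℕ) :
    projFree (List.replicate n (Sum.inl x : X ⊕ X)) = (FreeGroup.of x) ^ n := by
  induction n with
  | zero => simp [projFree]
  | succ n ih => rw [List.replicate_succ, projFree_cons, ih, pow_succ']; rfl

lemma projFree_replicate_inr (x : X) (n : ℕ) :
    projFree (List.replicate n (Sum.inr x : X ⊕ X)) = ((FreeGroup.of x)⁻¹) ^ n := by
  induction n with
  | zero => simp [projFree]
  | succ n ih => rw [List.replicate_succ, projFree_cons, ih, pow_succ']; rfl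

variable {S : Subgroup (FreeGroup X)} {x : X} {g : FreeGroup X}

lemma projFree_word_eq (n m : ℕ) :
    projFree (wordFor g⁻¹ ++ List.replicate n (Sum.inl x) ++ List.replicate m (Sum.inr x)
        ++ wordFor g)
      = g⁻¹ * (FreeGroup.of x) ^ ((n : ℤ) - (m : ℤ)) * g := by
  rw [projFree_append, projFree_append, projFree_append, projFree_wordFor, projFree_wordFor,
    projFree_replicate_inl, projFree_replicate_inr]
  rw [zpow_sub, zpow_natCast, zpow_natCast]
  group

lemma projFree_word_eq' (n m : ℕ) :
    projFree (wordFor g⁻¹ ++ List.replicate n (Sum.inr x) ++ List.replicate m (Sum.inl x)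
        ++ wordFor g)
      = g⁻¹ * (FreeGroup.of x) ^ ((m : ℤ) - (n : ℤ)) * g := by
  rw [projFree_append, projFree_append, projFree_append, projFree_wordFor, projFree_wordFor,
    projFree_replicate_inl, projFree_replicate_inr]
  rw [zpow_sub, zpow_natCast, zpow_natCast]
  group

lemma good_mem_iff (hx : ∀ k : ℤ, g⁻¹ * (FreeGroup.of x) ^ k * g ∈ S → k = 0) (n m : ℕ) :
    projFree (wordFor g⁻¹ ++ List.replicate n (Sum.inl x) ++ List.replicate m (Sum.inr x)
        ++ wordFor g) ∈ S ↔ n = m := by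
  rw [projFree_word_eq]
  constructor
  · intro h
    have := hx _ h
    omega
  · intro h
    subst h
    simp [S.one_mem]

lemma good_mem_iff' (hx : ∀ k : ℤ, g⁻¹ * (FreeGroup.of x) ^ k * g ∈ S → k = 0) (n m : ℕ) :
    projFree (wordFor g⁻¹ ++ List.replicate n (Sum.inr x) ++ List.replicate m (Sum.inl x)
        ++ wordFor g) ∈ S ↔ n = m := by
  rw [projFree_word_eq']
  constructor
  · intro h
    have := hx _ h
    omega
  · intro h
    subst h
    simp [S.one_mem]

/-- A regular language is a visibly pushdown language for the all-internal partition. -/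
lemma isVPL_of_regular {A : Type} (L : Set (List A)) (h : Language.IsRegular (L : Language A)) :
    IsVPL (fun _ => VKind.internal) L := by
  obtain ⟨σ, inst, M, hM⟩ := h
  refine ⟨{ Q := σ, Γ := Unit, finQ := inst, finΓ := inferInstance, init := M.start,
            accept := M.accept, δc := fun _ _ => ∅, δi := fun q a => {M.step q a},
            δr := fun _ _ _ => ∅, δb := fun _ _ => ∅ }, ?_⟩
  set N : VPA A (fun _ => VKind.internal) :=
    { Q := σ, Γ := Unit, finQ := inst, finΓ := inferInstance, init := M.start,
      accept := M.accept, δc := fun _ _ => ∅, δi := fun q a => {M.step q a},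
      δr := fun _ _ _ => ∅, δb := fun _ _ => ∅ } with hN
  have hsteps : ∀ (w : List A) (q : σ) (s : List Unit) (cfg : σ × List Unit),
      N.Steps (q, s) w cfg ↔ cfg = (M.evalFrom q w, s) := by
    intro w
    induction w with
    | nil =>
        intro q s cfg
        constructor
        · intro h; cases h; rfl
        · rintro rfl; exact .nil _
    | cons a w ih =>
        intro q s cfg
        constructor
        · intro h
          cases h with
          | call hk _ _ => simp at hk
          | pop hk _ _ => simp at hk
          | popEmpty hk _ _ => simp at hk
          | internal hk hm hs =>
              rw [Set.mem_singleton_iff] at hm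
              subst hm
              simpa using (ih _ _ _).mp hs
        · rintro rfl
          exact .internal rfl rfl ((ih _ _ _).mpr rfl)
  ext w
  constructor
  · intro hw
    have : w ∈ M.accepts := by rw [hM]; exact hw
    exact ⟨(M.evalFrom M.start w, []), (hsteps w _ _ _).mpr rfl, this⟩
  · rintro ⟨cfg, h1, h2⟩
    have := (hsteps w _ _ _).mp h1
    subst this
    have : w ∈ M.accepts := h2
    rw [hM] at this
    exact this

end Glue
/-- For a finitely generated subgroup S of a finitely generated free group,
the full preimage of S is a VPL (for some partition) if and only if S has
finite index, in which case the full preimage is in fact regular. -/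
theorem subgroup_VPLforall_iff_finiteIndex {X : Type} [Fintype X]
    (S : Subgroup (FreeGroup X)) (hfg : S.FG) :
    ((∃ kind : (X ⊕ X) → VKind,
        IsVPL kind (projFree ⁻¹' (S : Set (FreeGroup X)))) ↔ S.FiniteIndex) ∧
    (S.FiniteIndex →
      Language.IsRegular
        ((projFree ⁻¹' (S : Set (FreeGroup X)) : Set (List (X ⊕ X))) : Language (X ⊕ X))) := by
  have hreg : S.FiniteIndex →
      Language.IsRegular
        ((projFree ⁻¹' (S : Set (FreeGroup X)) : Set (List (X ⊕ X))) : Language (X ⊕ X)) := by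
    intro hfi
    haveI := hfi
    haveI : Finite (FreeGroup X ⧸ S) := Subgroup.finite_quotient_of_finiteIndex
    letI : Fintype (FreeGroup X ⧸ S) := Fintype.ofFinite _
    set μ : X ⊕ X → FreeGroup X :=
      Sum.elim (fun x => FreeGroup.of x) (fun x => (FreeGroup.of x)⁻¹) with hμ
    set M : DFA (X ⊕ X) (FreeGroup X ⧸ S) :=
      { step := fun q a => (μ a)⁻¹ • q,
        start := ((1 : FreeGroup X) : FreeGroup X ⧸ S),
        accept := {q | q = ((1 : FreeGroup X) : FreeGroup X ⧸ S)} } with hMdef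
    refine ⟨FreeGroup X ⧸ S, inferInstance, M, ?_⟩
    have heval : ∀ (w : List (X ⊕ X)) (q : FreeGroup X ⧸ S),
        M.evalFrom q w = (projFree w)⁻¹ • q := by
      intro w
      induction w with
      | nil => intro q; simp [projFree_nil]
      | cons a w ih =>
          intro q
          have h1 : M.evalFrom q (a :: w) = M.evalFrom ((μ a)⁻¹ • q) w := rfl
          rw [h1, ih, projFree_cons]
          rw [mul_inv_rev, mul_smul]
    ext w
    show w ∈ M.accepts ↔ projFree w ∈ S
    rw [DFA.mem_accepts]
    show M.evalFrom M.start w ∈ M.accept ↔ _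
    rw [heval]
    show (projFree w)⁻¹ • ((1 : FreeGroup X) : FreeGroup X ⧸ S)
        = ((1 : FreeGroup X) : FreeGroup X ⧸ S) ↔ _
    rw [MulAction.Quotient.smul_mk, smul_eq_mul, mul_one, QuotientGroup.eq]
    simp
  refine ⟨?_, hreg⟩
  constructor
  · rintro ⟨kind, M, hM⟩
    by_contra hnfi
    obtain ⟨x, g, hx⟩ := StallingsFlow.exists_good S hfg hnfi
    have haccept : ∀ w : List (X ⊕ X), M.Accepts w ↔ projFree w ∈ S := by
      intro w
      have := Set.ext_iff.mp hM w
      exact (this.symm : _)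
    set u : List (X ⊕ X) := wordFor g⁻¹ with hu
    set u' : List (X ⊕ X) := wordFor g with hu'
    have hmem₁ : ∀ n m : ℕ,
        M.Accepts (u ++ List.replicate n (Sum.inl x) ++ List.replicate m (Sum.inr x) ++ u')
          ↔ n = m := by
      intro n m
      rw [haccept]
      exact good_mem_iff hx n m
    have hmem₂ : ∀ n m : ℕ,
        M.Accepts (u ++ List.replicate n (Sum.inr x) ++ List.replicate m (Sum.inl x) ++ u')
          ↔ n = m := by
      intro n m
      rw [haccept]
      exact good_mem_iff' hx n m
    by_cases k1 : kind (Sum.inl x) = VKind.call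
    · by_cases k2 : kind (Sum.inr x) = VKind.call
      · exact VPA.pump_bothcall M u u' (Sum.inl x) (Sum.inr x) k1 k2 hmem₁
      · exact VPA.pump_noncall M u u' (Sum.inr x) (Sum.inl x) k2 hmem₂
    · exact VPA.pump_noncall M u u' (Sum.inl x) (Sum.inr x) k1 hmem₁
  · intro hfi
    exact ⟨fun _ => VKind.internal, isVPL_of_regular _ (hreg hfi)⟩
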